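/- Let E be a reflexive real Banach space with the Kadec-Klee property, {φ_n} a sequence in E* \ {0} converging in norm to φ ≠ 0, and {x_n} a sequence in the unit sphere S with φ_n(x_n) = ‖φ_n‖_{E*} for all n. Then there exists a subsequence of {x_n} converging in norm to some x ∈ S with φ(x) = ‖φ‖_{E*}. -/

import Mathlib

open NormedSpace Filter Topology


/-- Separation of a point from a closed subspace. -/
lemma aux_sep {X : Type*} [NormedAddCommGroup X] [NormedSpace ℝ X]
    (p : Submodule ℝ X) (hp : IsClosed (p : Set X)) {y : X} (hy : y ∉ p) :
    ∃ f : StrongDual ℝ X, (∀ z ∈ p, f z = 0) ∧ f y ≠ 0 := by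
  obtain ⟨f, u, hfp, hfy⟩ := geometric_hahn_banach_closed_point (p.convex) hp hy
  have hzero : ∀ z ∈ p, f z = 0 := by
    intro z hz
    by_contra h
    have : ∀ t : ℝ, t * f z < u := by
      intro t
      have := hfp (t • z) (p.smul_mem t hz)
      simpa using this
    have h1 := this ((u + 1) / f z)
    rw [div_mul_cancel₀ _ h] at h1
    linarith
  have h0 : (0 : ℝ) < u := by simpa using hfp 0 p.zero_mem
  exact ⟨f, hzero, by intro h; rw [h] at hfy; linarith⟩


/-- If the dual of a normed space is separable, so is the space. -/
lemma aux_dual_sep (X : Type*) [NormedAddCommGroup X] [NormedSpace ℝ X]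
    [TopologicalSpace.SeparableSpace (StrongDual ℝ X)] :
    TopologicalSpace.SeparableSpace X := by
  obtain ⟨D, Dcount, Ddense⟩ := TopologicalSpace.exists_countable_dense (StrongDual ℝ X)
  -- choose near-norming vectors
  have hv : ∀ g : StrongDual ℝ X, ∃ v : X, ‖v‖ ≤ 1 ∧ (g ≠ 0 → ‖g‖ / 2 < g v) := by
    intro g
    by_cases hg : g = 0
    · exact ⟨0, by simp, fun h => absurd hg h⟩
    · have hgn : 0 < ‖g‖ := norm_pos_iff.mpr hg
      obtain ⟨w, hw1, hw2⟩ := g.exists_lt_apply_of_lt_opNorm (r := ‖g‖ / 2) (by linarith)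
      rcases le_or_gt 0 (g w) with h | h
      · exact ⟨w, hw1.le, fun _ => by rwa [Real.norm_eq_abs, abs_of_nonneg h] at hw2⟩
      · refine ⟨-w, by simpa using hw1.le, fun _ => ?_⟩
        rw [Real.norm_eq_abs, abs_of_neg h] at hw2
        simpa using hw2
  choose v hv1 hv2 using hv
  set s : Set X := v '' D with hs
  have scount : s.Countable := Dcount.image v
  set M : Submodule ℝ X := (Submodule.span ℝ s).topologicalClosure with hM
  have hMclosed : IsClosed (M : Set X) := Submodule.isClosed_topologicalClosure _
  have hMtop : ∀ y : X, y ∈ M := by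
    intro y
    by_contra hy
    obtain ⟨f, hf0, hfy⟩ := aux_sep M hMclosed hy
    have hfne : f ≠ 0 := by intro h; apply hfy; rw [h]; rfl
    have hfn : 0 < ‖f‖ := norm_pos_iff.mpr hfne
    obtain ⟨g, hgmem, hgD⟩ := Metric.dense_iff.mp Ddense f (‖f‖ / 4) (by linarith)
    have hdist : ‖g - f‖ < ‖f‖ / 4 := by
      rw [← dist_eq_norm, dist_comm]; exact Metric.mem_ball'.mp hgmem
    have hgnorm : (3 / 4) * ‖f‖ ≤ ‖g‖ := by
      have := norm_sub_norm_le g f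
      have h2 : ‖f‖ - ‖g‖ ≤ ‖g - f‖ := by
        have := norm_sub_norm_le f g
        rwa [norm_sub_rev] at this
      linarith
    have hgne : g ≠ 0 := by
      intro h
      rw [h, norm_zero] at hgnorm
      linarith
    have hvM : v g ∈ M := by
      apply Submodule.le_topologicalClosure
      exact Submodule.subset_span ⟨g, hgD, rfl⟩
    have hfv : f (v g) = 0 := hf0 _ hvM
    have h1 : ‖g‖ / 2 < g (v g) := hv2 g hgne
    have h2 : g (v g) = (g - f) (v g) := by simp [hfv]
    have h3 : (g - f) (v g) ≤ ‖g - f‖ := by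
      calc (g - f) (v g) ≤ |(g - f) (v g)| := le_abs_self _
        _ ≤ ‖g - f‖ * ‖v g‖ := (g - f).le_opNorm _
        _ ≤ ‖g - f‖ * 1 := by
            exact mul_le_mul_of_nonneg_left (hv1 g) (norm_nonneg _)
        _ = ‖g - f‖ := mul_one _
    nlinarith [hgnorm, hdist, h1]
  have : TopologicalSpace.IsSeparable (Set.univ : Set X) := by
    have h1 : TopologicalSpace.IsSeparable (Submodule.span ℝ s : Set X) :=
      (scount.isSeparable).span
    have h2 : TopologicalSpace.IsSeparable (M : Set X) := by
      rw [hM]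
      exact TopologicalSpace.isSeparable_closure.mpr h1
    apply h2.mono
    intro z _
    exact hMtop z
  exact TopologicalSpace.isSeparable_univ_iff.mp this


/-- A closed subspace of a reflexive space is reflexive. -/
lemma aux_subrefl {X : Type*} [NormedAddCommGroup X] [NormedSpace ℝ X]
    (hrefl : Function.Surjective (inclusionInDoubleDual ℝ X))
    (p : Submodule ℝ X) (hp : IsClosed (p : Set X)) :
    Function.Surjective (inclusionInDoubleDual ℝ ↥p) := by
  -- restriction operator
  let Rlin : StrongDual ℝ X →ₗ[ℝ] StrongDual ℝ ↥p :=
    { toFun := fun ψ => ψ.comp p.subtypeL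
      map_add' := fun ψ₁ ψ₂ => by ext z; simp
      map_smul' := fun c ψ => by ext z; simp }
  have hRbound : ∀ ψ : StrongDual ℝ X, ‖Rlin ψ‖ ≤ 1 * ‖ψ‖ := by
    intro ψ
    rw [one_mul]
    refine ContinuousLinearMap.opNorm_le_bound _ (norm_nonneg ψ) fun z => ?_
    calc ‖ψ (p.subtypeL z)‖ ≤ ‖ψ‖ * ‖(z : X)‖ := ψ.le_opNorm _
      _ = ‖ψ‖ * ‖z‖ := by rw [Submodule.norm_coe]
  let R : StrongDual ℝ X →L[ℝ] StrongDual ℝ ↥p := LinearMap.mkContinuous (E := StrongDual ℝ X) (F := StrongDual ℝ ↥p) Rlin 1 hRbound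
  intro g
  obtain ⟨y, hy⟩ := hrefl (g.comp R)
  have hy' : ∀ ψ : StrongDual ℝ X, ψ y = g (ψ.comp p.subtypeL) := by
    intro ψ
    have := congrFun (congrArg DFunLike.coe hy) ψ
    simpa [dual_def, R, Rlin] using this
  have hyp : y ∈ p := by
    by_contra hyp
    obtain ⟨f, hf0, hfy⟩ := aux_sep p hp hyp
    apply hfy
    rw [hy' f]
    have : f.comp p.subtypeL = 0 := by
      ext z; exact hf0 _ z.2
    rw [this, map_zero]
  refine ⟨⟨y, hyp⟩, ?_⟩
  ext f
  obtain ⟨ψ, hψ, _⟩ := exists_extension_norm_eq p f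
  have h1 : ψ.comp p.subtypeL = f := by ext z; exact hψ z
  calc (inclusionInDoubleDual ℝ ↥p ⟨y, hyp⟩) f = f ⟨y, hyp⟩ := rfl
    _ = ψ y := (hψ ⟨y, hyp⟩).symm
    _ = g (ψ.comp p.subtypeL) := hy' ψ
    _ = g f := by rw [h1]


set_option maxHeartbeats 1000000 in
/-- If `φₙ → φ ≠ 0` in `E*`, `φₙ ≠ 0`, and `xₙ ∈ S` with `φₙ xₙ = ‖φₙ‖`, then some
subsequence of `xₙ` converges in norm to a point `x ∈ S` with `φ x = ‖φ‖`. -/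
theorem stmt9 (E : Type*) [NormedAddCommGroup E] [NormedSpace ℝ E] [CompleteSpace E]
    (hrefl : Function.Surjective (inclusionInDoubleDual ℝ E))
    (hKK : ∀ (x : ℕ → E) (y : E), (∀ n, ‖x n‖ = 1) → ‖y‖ = 1 →
      (∀ φ : StrongDual ℝ E, Tendsto (fun n => φ (x n)) atTop (𝓝 (φ y))) →
      Tendsto (fun n => ‖x n - y‖) atTop (𝓝 0))
    (φs : ℕ → StrongDual ℝ E) (φ : StrongDual ℝ E) (hφs : ∀ n, φs n ≠ 0) (hφ : φ ≠ 0)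
    (hconv : Tendsto φs atTop (𝓝 φ))
    (x : ℕ → E) (hx : ∀ n, ‖x n‖ = 1) (heq : ∀ n, φs n (x n) = ‖φs n‖) :
    ∃ σ : ℕ → ℕ, StrictMono σ ∧ ∃ y : E, ‖y‖ = 1 ∧ φ y = ‖φ‖ ∧
      Tendsto (fun k => x (σ k)) atTop (𝓝 y) := by
  classical
  -- the separable closed subspace generated by the sequence
  set F : Submodule ℝ E := (Submodule.span ℝ (Set.range x)).topologicalClosure with hF
  have hFclosed : IsClosed (F : Set E) := Submodule.isClosed_topologicalClosure _
  have hxF : ∀ n, x n ∈ F := fun n =>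
    Submodule.le_topologicalClosure _ (Submodule.subset_span ⟨n, rfl⟩)
  set x' : ℕ → ↥F := fun n => ⟨x n, hxF n⟩ with hx'
  have hx'norm : ∀ n, ‖x' n‖ = 1 := fun n => by
    rw [hx']; simpa [Submodule.norm_coe] using hx n
  -- F is separable
  haveI hFsepSp : TopologicalSpace.SeparableSpace ↥F := by
    have h1 : TopologicalSpace.IsSeparable (Submodule.span ℝ (Set.range x) : Set E) :=
      (Set.countable_range x).isSeparable.span
    have h2 : TopologicalSpace.IsSeparable (F : Set E) :=
      TopologicalSpace.isSeparable_closure.mpr h1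
    exact h2.separableSpace
  -- F is reflexive, hence F** is separable, hence F* is separable
  have hFrefl : Function.Surjective (inclusionInDoubleDual ℝ ↥F) :=
    aux_subrefl hrefl F hFclosed
  haveI : TopologicalSpace.SeparableSpace (StrongDual ℝ (StrongDual ℝ ↥F)) :=
    hFrefl.denseRange.separableSpace (inclusionInDoubleDual ℝ ↥F).continuous
  haveI hFdualSep : TopologicalSpace.SeparableSpace (StrongDual ℝ ↥F) := aux_dual_sep (StrongDual ℝ ↥F)
  -- a dense sequence in F*
  obtain ⟨d, hd⟩ := TopologicalSpace.exists_dense_seq (StrongDual ℝ ↥F)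
  -- diagonal extraction via compactness of a product of intervals
  set K : Set (ℕ → ℝ) := Set.pi Set.univ (fun j => Metric.closedBall (0 : ℝ) ‖d j‖) with hK
  have hKcomp : IsCompact K := isCompact_univ_pi fun j => ProperSpace.isCompact_closedBall _ _
  have hmem : ∀ k, (fun j => d j (x' k)) ∈ K := by
    intro k j _
    simp only [Metric.mem_closedBall, dist_zero_right]
    calc ‖d j (x' k)‖ ≤ ‖d j‖ * ‖x' k‖ := (d j).le_opNorm _
      _ = ‖d j‖ := by rw [hx'norm, mul_one]
  obtain ⟨a, -, σ, hσ, haconv⟩ := hKcomp.isSeqCompact hmem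
  have hptwise : ∀ j, Tendsto (fun k => d j (x' (σ k))) atTop (𝓝 (a j)) := by
    intro j
    exact (tendsto_pi_nhds.mp haconv) j
  -- for every ψ ∈ E*, the sequence ψ(x (σ k)) is Cauchy
  have hCauchy : ∀ ψ : StrongDual ℝ E, CauchySeq (fun k => ψ (x (σ k))) := by
    intro ψ
    rw [Metric.cauchySeq_iff]
    intro ε hε
    set ψF : StrongDual ℝ ↥F := ψ.comp F.subtypeL with hψF
    obtain ⟨j, hj⟩ := Metric.denseRange_iff.mp hd ψF (ε / 4) (by linarith)
    have hjd : ‖ψF - d j‖ < ε / 4 := (dist_eq_norm ψF (d j)).symm.trans_lt hj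
    have hdc : CauchySeq (fun k => d j (x' (σ k))) := (hptwise j).cauchySeq
    rw [Metric.cauchySeq_iff] at hdc
    obtain ⟨N, hN⟩ := hdc (ε / 4) (by linarith)
    refine ⟨N, fun m hm n hn => ?_⟩
    have key : ∀ k, |ψ (x (σ k)) - d j (x' (σ k))| ≤ ε / 4 := by
      intro k
      have h1 : ψ (x (σ k)) = ψF (x' (σ k)) := rfl
      rw [h1]
      have : ψF (x' (σ k)) - d j (x' (σ k)) = (ψF - d j) (x' (σ k)) := by simp
      rw [this]
      calc |(ψF - d j) (x' (σ k))| ≤ ‖ψF - d j‖ * ‖x' (σ k)‖ := (ψF - d j).le_opNorm _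
        _ = ‖ψF - d j‖ := by rw [hx'norm, mul_one]
        _ ≤ ε / 4 := hjd.le
    have h2 := hN m hm n hn
    rw [Real.dist_eq] at h2 ⊢
    have k1 := key m
    have k2 := key n
    have : |ψ (x (σ m)) - ψ (x (σ n))| ≤ |ψ (x (σ m)) - d j (x' (σ m))| +
        |d j (x' (σ m)) - d j (x' (σ n))| + |d j (x' (σ n)) - ψ (x (σ n))| := by
      have := abs_sub_abs_le_abs_sub (ψ (x (σ m))) (ψ (x (σ n)))
      calc |ψ (x (σ m)) - ψ (x (σ n))|
          = |(ψ (x (σ m)) - d j (x' (σ m))) + (d j (x' (σ m)) - d j (x' (σ n)))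
            + (d j (x' (σ n)) - ψ (x (σ n)))| := by ring_nf
        _ ≤ _ := by
            refine (abs_add_le _ _).trans ?_
            gcongr
            exact abs_add_le _ _
    have k3 : |d j (x' (σ n)) - ψ (x (σ n))| ≤ ε / 4 := by rw [abs_sub_comm]; exact k2
    linarith
  -- limits define an element of E**
  have hL : ∀ ψ : StrongDual ℝ E, ∃ c : ℝ, Tendsto (fun k => ψ (x (σ k))) atTop (𝓝 c) :=
    fun ψ => cauchySeq_tendsto_of_complete (hCauchy ψ)
  choose L hLt using hL
  have hLbound : ∀ ψ : StrongDual ℝ E, ‖L ψ‖ ≤ 1 * ‖ψ‖ := by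
    intro ψ
    rw [one_mul]
    refine le_of_tendsto (hLt ψ).norm (Eventually.of_forall fun k => ?_)
    calc ‖ψ (x (σ k))‖ ≤ ‖ψ‖ * ‖x (σ k)‖ := ψ.le_opNorm _
      _ = ‖ψ‖ := by rw [hx, mul_one]
  set Lmap : StrongDual ℝ E →L[ℝ] ℝ := LinearMap.mkContinuous
    { toFun := L
      map_add' := fun ψ₁ ψ₂ => by
        refine tendsto_nhds_unique (hLt (ψ₁ + ψ₂)) ?_
        have := (hLt ψ₁).add (hLt ψ₂)
        simpa using this
      map_smul' := fun c ψ => by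
        refine tendsto_nhds_unique (hLt (c • ψ)) ?_
        have := (hLt ψ).const_mul c
        simpa using this } 1 hLbound with hLmap
  obtain ⟨y, hy⟩ := hrefl Lmap
  have hyw : ∀ ψ : StrongDual ℝ E, Tendsto (fun k => ψ (x (σ k))) atTop (𝓝 (ψ y)) := by
    intro ψ
    have : ψ y = L ψ := by
      have := congrFun (congrArg DFunLike.coe hy) ψ
      rw [dual_def] at this
      rw [this]; rfl
    rw [this]; exact hLt ψ
  -- the norm of y is at most 1
  have hyle : ‖y‖ ≤ 1 := by
    refine norm_le_dual_bound ℝ y zero_le_one fun f => ?_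
    have : f y = L f := tendsto_nhds_unique (hyw f) (hLt f)
    rw [this]; exact hLbound f
  -- φ (x n) → ‖φ‖
  have hnormconv : Tendsto (fun n => ‖φs n‖) atTop (𝓝 ‖φ‖) := hconv.norm
  have herr : Tendsto (fun n => φ (x n) - ‖φs n‖) atTop (𝓝 0) := by
    have h1 : ∀ n, φ (x n) - ‖φs n‖ = (φ - φs n) (x n) := by
      intro n; rw [← heq n]; simp
    have h2 : Tendsto (fun n => ‖φ - φs n‖) atTop (𝓝 0) := by
      have := tendsto_iff_norm_sub_tendsto_zero.mp hconv
      simpa [norm_sub_rev] using this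
    refine squeeze_zero_norm (fun n => ?_) h2
    rw [h1 n]
    calc ‖(φ - φs n) (x n)‖ ≤ ‖φ - φs n‖ * ‖x n‖ := (φ - φs n).le_opNorm _
      _ = ‖φ - φs n‖ := by rw [hx, mul_one]
  have hφx : Tendsto (fun n => φ (x n)) atTop (𝓝 ‖φ‖) := by
    have := herr.add hnormconv
    simpa using this
  have hφy : φ y = ‖φ‖ :=
    tendsto_nhds_unique (hyw φ) (hφx.comp hσ.tendsto_atTop)
  -- so ‖y‖ = 1
  have hφpos : 0 < ‖φ‖ := norm_pos_iff.mpr hφ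
  have hyge : 1 ≤ ‖y‖ := by
    by_contra h
    push_neg at h
    have : ‖φ‖ ≤ ‖φ‖ * ‖y‖ := by
      calc ‖φ‖ = φ y := hφy.symm
        _ ≤ ‖φ y‖ := le_abs_self _
        _ ≤ ‖φ‖ * ‖y‖ := φ.le_opNorm y
    have h2 := mul_lt_mul_of_pos_left h hφpos
    rw [mul_one] at h2
    linarith
  have hynorm : ‖y‖ = 1 := le_antisymm hyle hyge
  -- Kadec-Klee gives norm convergence
  have hKKconc := hKK (fun k => x (σ k)) y (fun k => hx (σ k)) hynorm hyw
  exact ⟨σ, hσ, y, hynorm, hφy, tendsto_iff_norm_sub_tendsto_zero.mpr hKKconc⟩
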